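/- arXiv:2112.07073 — 2 statements merged into one kernel-verified Lean document; each statement's English description precedes it below -/
import Mathlib

section
/- Let 0 < λ ≤ 1 and 0 < α ≤ 1. Let f be analytic on the open unit disk 𝔻 with f(0) = 0 and f′(0) = 1, suppose Re(f(z)/z) > 0 for all z ∈ 𝔻 \ {0} (with f(z)/z → 1 as z → 0), and suppose |f′(z)·(z/f(z))^{α+1} − 1| < λ for all z ∈ 𝔻 \ {0}, where the power is the principal branch. Set R_{λ,α} = ( −(λ + 4α) + √(λ² + 20α² + 12λα) ) / (2(λ+α)). Then for every z ∈ 𝔻 \ {0} with |z| < R_{λ,α}, f′(z) ≠ 0, f(z) ≠ 0 and Re( (1/α)·(1 + z f″(z)/f′(z)) + (1 − 1/α)·(z f′(z)/f(z)) ) > 0; that is, f is (1/α)-convex in |z| < R_{λ,α}. -/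
open Complex Metric
open Set

lemma mobius_abs_lt {a w : ℂ} (ha : ‖a‖ < 1) (hw : ‖w‖ < 1) :
    ‖(w + a) / (1 + (starRingEnd ℂ) a * w)‖ < 1 := by
  have hna : Complex.normSq a < 1 := by rw [← Complex.sq_norm]; nlinarith [norm_nonneg a]
  have hnw : Complex.normSq w < 1 := by rw [← Complex.sq_norm]; nlinarith [norm_nonneg w]
  have hden : (1 : ℂ) + (starRingEnd ℂ) a * w ≠ 0 := by
    intro h
    have h1 : ‖(starRingEnd ℂ) a * w‖ < 1 := by
      rw [norm_mul, Complex.norm_conj]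
      nlinarith [norm_nonneg a, norm_nonneg w]
    have h2 : (starRingEnd ℂ) a * w = -1 := by linear_combination h
    rw [h2] at h1; simp at h1
  have hlt : Complex.normSq (w + a) < Complex.normSq (1 + (starRingEnd ℂ) a * w) := by
    simp only [Complex.normSq_apply, Complex.add_re, Complex.add_im, Complex.mul_re,
      Complex.mul_im, Complex.conj_re, Complex.conj_im, Complex.one_re, Complex.one_im,
      Complex.normSq_apply] at *
    nlinarith [sq_nonneg (a.re * w.re - a.im * w.im), sq_nonneg (a.re*w.im + a.im*w.re)]
  rw [norm_div, div_lt_one (norm_pos_iff.mpr hden)]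
  have := norm_pos_iff.mpr hden
  have e1 : (‖w + a‖)^2 = Complex.normSq (w+a) := Complex.sq_norm _
  have e2 : (‖1 + (starRingEnd ℂ) a * w‖)^2 = Complex.normSq _ := Complex.sq_norm _
  nlinarith [norm_nonneg (w+a), this]

lemma schwarzPick {g : ℂ → ℂ} (hd : DifferentiableOn ℂ g (ball 0 1))
    (hm : MapsTo g (ball 0 1) (ball 0 1)) {a : ℂ} (ha : a ∈ ball 0 1) :
    ‖deriv g a‖ * (1 - (‖a‖)^2) ≤ 1 - (‖g a‖)^2 := by
  have ha' : ‖a‖ < 1 := by simpa [mem_ball, dist_eq] using ha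
  set b := g a with hb_def
  have hb' : ‖b‖ < 1 := by simpa [mem_ball, dist_eq] using hm ha
  set φ : ℂ → ℂ := fun w => (w + a) / (1 + (starRingEnd ℂ) a * w) with hφ
  set ψ : ℂ → ℂ := fun w => (w + -b) / (1 + (starRingEnd ℂ) (-b) * w) with hψ
  set G : ℂ → ℂ := fun w => ψ (g (φ w)) with hG
  -- denominators nonzero helpers
  have hden : ∀ (c w : ℂ), ‖c‖ < 1 → ‖w‖ < 1 →
      (1 : ℂ) + (starRingEnd ℂ) c * w ≠ 0 := by
    intro c w hc hw h
    have h1 : ‖(starRingEnd ℂ) c * w‖ < 1 := by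
      rw [norm_mul, Complex.norm_conj]
      nlinarith [norm_nonneg c, norm_nonneg w]
    have h2 : (starRingEnd ℂ) c * w = -1 := by linear_combination h
    rw [h2] at h1; simp at h1
  have hφmaps : ∀ w : ℂ, ‖w‖ < 1 → ‖φ w‖ < 1 :=
    fun w hw => mobius_abs_lt ha' hw
  have hψmaps : ∀ w : ℂ, ‖w‖ < 1 → ‖ψ w‖ < 1 :=
    fun w hw => mobius_abs_lt (by simpa using hb') hw
  -- G maps ball to ball
  have hGmaps : MapsTo G (ball 0 1) (ball 0 1) := by
    intro w hw
    have hw' : ‖w‖ < 1 := by simpa [mem_ball, dist_eq] using hw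
    have h1 := hφmaps w hw'
    have h2 : ‖g (φ w)‖ < 1 := by
      simpa [mem_ball, dist_eq] using hm (by simpa [mem_ball, dist_eq] using h1)
    simpa [mem_ball, dist_eq] using hψmaps _ h2
  -- G differentiable
  have hGdiff : DifferentiableOn ℂ G (ball 0 1) := by
    intro w hw
    have hw' : ‖w‖ < 1 := by simpa [mem_ball, dist_eq] using hw
    have h1 : ‖φ w‖ < 1 := hφmaps w hw'
    have h2 : ‖g (φ w)‖ < 1 := by
      simpa [mem_ball, dist_eq] using hm (by simpa [mem_ball, dist_eq] using h1)
    have dφ : DifferentiableAt ℂ φ w := by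
      apply DifferentiableAt.div
      · fun_prop
      · fun_prop
      · exact hden a w ha' hw'
    have dg : DifferentiableAt ℂ g (φ w) :=
      hd.differentiableAt (isOpen_ball.mem_nhds (by simpa [mem_ball, dist_eq] using h1))
    have dψ : DifferentiableAt ℂ ψ (g (φ w)) := by
      apply DifferentiableAt.div
      · fun_prop
      · fun_prop
      · exact hden (-b) _ (by simpa using hb') h2
    exact ((dψ.comp _ dg).comp _ dφ).differentiableWithinAt
  have hG0 : G 0 = 0 := by
    simp only [hG, hφ, hψ]
    simp
    left; rw [hb_def]; ring
  -- derivative computations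
  have hφd : HasDerivAt φ (1 - (starRingEnd ℂ) a * a) 0 := by
    have h0 : (1 : ℂ) + (starRingEnd ℂ) a * 0 ≠ 0 := by simp
    have := ((hasDerivAt_id (0:ℂ)).add_const a).div
      (((hasDerivAt_id (0:ℂ)).const_mul ((starRingEnd ℂ) a)).const_add 1) h0
    refine this.congr_deriv ?_
    simp only [id, mul_zero, add_zero, one_pow, div_one, mul_one, one_mul, zero_add]
    ring
  have hgd : HasDerivAt g (deriv g a) a :=
    (hd.differentiableAt (isOpen_ball.mem_nhds ha)).hasDerivAt
  have hnb : Complex.normSq b < 1 := by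
    rw [← Complex.sq_norm]; nlinarith [norm_nonneg b]
  have hψd : HasDerivAt ψ ((1 - Complex.normSq b) / (1 - Complex.normSq b)^2) b := by
    have h0 : (1 : ℂ) + (starRingEnd ℂ) (-b) * b ≠ 0 := by
      have : Complex.normSq b ≠ 1 := ne_of_lt hnb
      simp only [map_neg, neg_mul]
      intro h
      have h2 : (starRingEnd ℂ) b * b = 1 := by linear_combination -h
      rw [mul_comm, Complex.mul_conj] at h2
      exact hnb.ne (by exact_mod_cast h2)
    have := ((hasDerivAt_id b).add_const (-b)).div
      (((hasDerivAt_id b).const_mul ((starRingEnd ℂ) (-b))).const_add 1) h0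
    have e : (starRingEnd ℂ) b * b = (Complex.normSq b : ℂ) := by
      rw [mul_comm, Complex.mul_conj]
    refine this.congr_deriv ?_
    simp only [map_neg, neg_mul, id_eq, one_mul, mul_one, add_neg_cancel, zero_mul, sub_zero]
    rw [e]
    push_cast
    ring
  -- chain rule
  have hφ0 : φ 0 = a := by simp [hφ]
  have hgd' : HasDerivAt g (deriv g a) (φ 0) := by rw [hφ0]; exact hgd
  have hψd' : HasDerivAt ψ (((1:ℂ) - Complex.normSq b) / ((1:ℂ) - Complex.normSq b)^2)
      (g (φ 0)) := by rw [hφ0]; exact hψd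
  have hGd : HasDerivAt G ((((1:ℂ) - Complex.normSq b) / ((1:ℂ) - Complex.normSq b)^2) *
      (deriv g a * (1 - (starRingEnd ℂ) a * a))) 0 := by
    have := hψd'.comp 0 (hgd'.comp 0 hφd)
    exact this
  have hle := Complex.norm_deriv_le_one_of_mapsTo_ball hGdiff (by rw [hG0]; exact hGmaps.mono_right ball_subset_closedBall) one_pos
  rw [hGd.deriv] at hle
  have hb0 : (0:ℝ) < 1 - Complex.normSq b := by linarith
  have hNa : Complex.normSq a < 1 := by
    rw [← Complex.sq_norm]; nlinarith [norm_nonneg a]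
  have ha0 : (0:ℝ) < 1 - Complex.normSq a := by linarith
  have eabs : ‖(((1:ℂ) - Complex.normSq b) / ((1:ℂ) - Complex.normSq b)^2)‖
      = (1 - Complex.normSq b)⁻¹ := by
    rw [norm_div, norm_pow]
    have e : ‖(1:ℂ) - (Complex.normSq b : ℂ)‖ = 1 - Complex.normSq b := by
      rw [show ((1:ℂ) - (Complex.normSq b : ℂ)) = (((1 - Complex.normSq b : ℝ)):ℂ) by
        push_cast; ring, Complex.norm_of_nonneg hb0.le]
    rw [e]
    field_simp
  have eabs2 : ‖(1:ℂ) - (starRingEnd ℂ) a * a‖ = 1 - Complex.normSq a := by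
    rw [show ((1:ℂ) - (starRingEnd ℂ) a * a) = (((1 - Complex.normSq a : ℝ)):ℂ) by
      rw [mul_comm, Complex.mul_conj]; push_cast; ring, Complex.norm_of_nonneg ha0.le]
  rw [norm_mul, norm_mul, eabs, eabs2] at hle
  rw [Complex.sq_norm, Complex.sq_norm]
  have h2 := mul_le_mul_of_nonneg_left hle hb0.le
  rw [← mul_assoc, mul_inv_cancel₀ hb0.ne', one_mul, mul_one] at h2
  linarith

lemma key_identity (αC z F1 F2 fz P : ℂ) (hα : αC ≠ 0) (hz : z ≠ 0) (hfz : fz ≠ 0)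
    (hF1 : F1 ≠ 0) (hP : P ≠ 0) :
    αC⁻¹ * (1 + z * F2 / F1) + (1 - αC⁻¹) * (z * F1 / fz)
    = 1 + αC⁻¹ * (z * (F2 * P + F1 * ((αC + 1) * (P * (fz / z)) *
        (-((F1 * z - fz) / z ^ 2) / (fz / z) ^ 2))) / (F1 * P))
      + 2 * (z * ((F1 * z - fz) / z ^ 2) / (fz / z)) := by
  have e1 : (αC + 1) * (P * (fz / z)) * (-((F1 * z - fz) / z ^ 2) / (fz / z) ^ 2)
      = (αC + 1) * P * (-(F1 * z - fz) / (fz * z)) := by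
    rw [div_pow]
    field_simp
  have e2 : z * ((F1 * z - fz) / z ^ 2) / (fz / z) = (F1 * z - fz) / fz := by
    field_simp
  rw [e1, e2]
  have e3 : z * (F2 * P + F1 * ((αC + 1) * P * (-(F1 * z - fz) / (fz * z)))) / (F1 * P)
      = (z * F2 * fz - F1 * (αC + 1) * (F1 * z - fz)) / (F1 * fz) := by
    field_simp
    ring
  rw [e3]
  field_simp
  ring

set_option maxHeartbeats 2000000 in
theorem stmt_18 (lam α : ℝ) (hlam : lam ∈ Set.Ioc (0 : ℝ) 1)
    (hα : α ∈ Set.Ioc (0 : ℝ) 1)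
    (f : ℂ → ℂ) (hanal : DifferentiableOn ℂ f (ball (0 : ℂ) 1))
    (hf0 : f 0 = 0) (hf'0 : deriv f 0 = 1)
    (hP : ∀ z ∈ ball (0 : ℂ) 1, z ≠ 0 → 0 < (f z / z).re)
    (hU : ∀ z ∈ ball (0 : ℂ) 1, z ≠ 0 →
      ‖deriv f z * (z / f z) ^ ((α : ℂ) + 1) - 1‖ < lam)
    (R : ℝ)
    (hR : R = (-(lam + 4 * α) +
      Real.sqrt (lam ^ 2 + 20 * α ^ 2 + 12 * lam * α)) / (2 * (lam + α))) :
    ∀ z : ℂ, z ≠ 0 → ‖z‖ < R →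
      deriv f z ≠ 0 ∧ f z ≠ 0 ∧
      0 < (((α : ℂ))⁻¹ * (1 + z * deriv (deriv f) z / deriv f z) +
        (1 - ((α : ℂ))⁻¹) * (z * deriv f z / f z)).re := by
  obtain ⟨hlam0, hlam1⟩ := hlam
  obtain ⟨hα0, hα1⟩ := hα
  set s : ℝ := Real.sqrt (lam ^ 2 + 20 * α ^ 2 + 12 * lam * α) with hs_def
  have hs2 : s ^ 2 = lam ^ 2 + 20 * α ^ 2 + 12 * lam * α :=
    Real.sq_sqrt (by positivity)
  have hs0 : 0 ≤ s := Real.sqrt_nonneg _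
  have hR1 : R < 1 := by
    rw [hR, div_lt_one (by positivity)]
    nlinarith
  intro z hz0 hzR
  set r : ℝ := ‖z‖ with hr_def
  have hr1 : r < 1 := lt_trans hzR hR1
  have hzball : z ∈ ball (0 : ℂ) 1 := by simpa [mem_ball, dist_eq] using hr1
  have hr0 : 0 < r := norm_pos_iff.mpr hz0
  have hquad : (lam + α) * r ^ 2 + (lam + 4 * α) * r - α < 0 := by
    have hQR : (lam + α) * R ^ 2 + (lam + 4 * α) * R - α = 0 := by
      rw [hR]
      field_simp
      nlinarith
    have hRpos : 0 < R := lt_trans hr0 hzR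
    nlinarith [hQR, mul_lt_mul_of_pos_left hzR (by positivity : (0:ℝ) < lam + 4*α),
      mul_lt_mul_of_pos_left (pow_lt_pow_left₀ hzR hr0.le two_ne_zero)
        (by positivity : (0:ℝ) < lam + α)]
  -- the function q = f z / z, extended by 1 at 0
  set q : ℂ → ℂ := dslope f 0 with hq_def
  have hqdiff : DifferentiableOn ℂ q (ball 0 1) :=
    (Complex.differentiableOn_dslope (ball_mem_nhds _ one_pos)).mpr hanal
  have hq0 : q 0 = 1 := by rw [hq_def, dslope_same, hf'0]
  have hqz : ∀ w : ℂ, w ≠ 0 → q w = f w / w := by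
    intro w hw
    rw [hq_def, dslope_of_ne f hw, slope_def_field, hf0, sub_zero, sub_zero]
  have hqre : ∀ w ∈ ball (0 : ℂ) 1, 0 < (q w).re := by
    intro w hw
    by_cases h : w = 0
    · rw [h, hq0]; norm_num
    · rw [hqz w h]; exact hP w hw h
  have hqne : ∀ w ∈ ball (0 : ℂ) 1, q w ≠ 0 := by
    intro w hw h
    have := hqre w hw
    rw [h] at this; simp at this
  have hfa : AnalyticOnNhd ℂ f (ball 0 1) := hanal.analyticOnNhd isOpen_ball
  have hf'diff : DifferentiableOn ℂ (deriv f) (ball 0 1) := hfa.deriv.differentiableOn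
  have hinvre : ∀ w ∈ ball (0 : ℂ) 1, 0 < ((q w)⁻¹).re := by
    intro w hw
    rw [Complex.inv_re]
    exact div_pos (hqre w hw) (Complex.normSq_pos.mpr (hqne w hw))
  have hslit : ∀ w ∈ ball (0 : ℂ) 1, (q w)⁻¹ ∈ Complex.slitPlane :=
    fun w hw => Or.inl (hinvre w hw)
  set c : ℂ := (α : ℂ) + 1 with hc_def
  set H : ℂ → ℂ := fun w => deriv f w * ((q w)⁻¹) ^ c with hH_def
  have hHdiff : DifferentiableOn ℂ H (ball 0 1) := by
    intro w hw
    have h1 : DifferentiableAt ℂ q w := hqdiff.differentiableAt (isOpen_ball.mem_nhds hw)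
    have h2 : DifferentiableAt ℂ (fun w => ((q w)⁻¹) ^ c) w :=
      (((h1.inv (hqne w hw)).hasDerivAt.cpow_const (hslit w hw)).differentiableAt)
    exact ((hf'diff.differentiableAt (isOpen_ball.mem_nhds hw)).mul h2).differentiableWithinAt
  have hH0 : H 0 = 1 := by
    rw [hH_def]; simp [hq0, hf'0]
  have hHlam : ∀ w ∈ ball (0 : ℂ) 1, ‖H w - 1‖ < lam := by
    intro w hw
    by_cases h : w = 0
    · rw [h, hH0]; simpa using hlam0
    · have e : (q w)⁻¹ = w / f w := by rw [hqz w h, inv_div]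
      rw [hH_def]
      simp only []
      rw [e]
      exact hU w hw h
  -- Schwarz function u
  have hlamC : ((lam : ℝ) : ℂ) ≠ 0 := by exact_mod_cast hlam0.ne'
  set u : ℂ → ℂ := fun w => (H w - 1) / ((lam : ℝ) : ℂ) with hu_def
  have hudiff : DifferentiableOn ℂ u (ball 0 1) := by
    intro w hw
    exact (((hHdiff w hw).sub_const 1).div_const _)
  have humaps : MapsTo u (ball 0 1) (ball 0 1) := by
    intro w hw
    rw [mem_ball, dist_eq, sub_zero, hu_def]
    simp only []
    rw [norm_div, Complex.norm_of_nonneg hlam0.le, div_lt_one hlam0]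
    exact hHlam w hw
  have hu0 : u 0 = 0 := by rw [hu_def]; simp [hH0]
  set tu : ℝ := ‖u z‖ with htu_def
  have htur : tu ≤ r := Complex.norm_le_norm_of_mapsTo_ball hudiff (humaps.mono_right ball_subset_closedBall) hu0 hr1
  have htu0 : 0 ≤ tu := norm_nonneg _
  have hSPu : ‖deriv u z‖ * (1 - r ^ 2) ≤ 1 - tu ^ 2 :=
    schwarzPick hudiff humaps hzball
  -- derivative of q at z
  have hfz : f z ≠ 0 := by
    intro h
    have := hP z hzball hz0
    rw [h] at this; simp at this
  have hfd : HasDerivAt f (deriv f z) z :=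
    (hanal.differentiableAt (isOpen_ball.mem_nhds hzball)).hasDerivAt
  set Q' : ℂ := (deriv f z * z - f z) / z ^ 2 with hQ'_def
  have hqd : HasDerivAt q Q' z := by
    have hdiv : HasDerivAt (fun w => f w / w) ((deriv f z * z - f z * 1) / z ^ 2) z :=
      hfd.div (hasDerivAt_id z) hz0
    have hdiv' : HasDerivAt (fun w => f w / w) Q' z := by
      convert hdiv using 1; rw [hQ'_def]; ring
    apply hdiv'.congr_of_eventuallyEq
    filter_upwards [eventually_ne_nhds hz0] with w hw
    exact hqz w hw
  have hQ'deriv : deriv q z = Q' := hqd.deriv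
  have hqzval : q z = f z / z := hqz z hz0
  -- derivative of H at z
  have hf''d : HasDerivAt (deriv f) (deriv (deriv f) z) z :=
    (hf'diff.differentiableAt (isOpen_ball.mem_nhds hzball)).hasDerivAt
  set P : ℂ := ((q z)⁻¹) ^ c with hP_def
  have hqzne : q z ≠ 0 := hqne z hzball
  have hPne : P ≠ 0 := by
    rw [hP_def, Complex.cpow_def_of_ne_zero (inv_ne_zero hqzne)]
    exact Complex.exp_ne_zero _
  have hPP' : ((q z)⁻¹) ^ (c - 1) = P * q z := by
    have e : ((q z)⁻¹) ^ (c - 1) * ((q z)⁻¹) ^ (1:ℂ) = P := by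
      rw [← Complex.cpow_add _ _ (inv_ne_zero hqzne), sub_add_cancel, hP_def]
    rw [Complex.cpow_one] at e
    rw [← e]
    field_simp
  set DH : ℂ := deriv (deriv f) z * P +
      deriv f z * (c * (P * q z) * (-Q' / (q z) ^ 2)) with hDH_def
  have hHd : HasDerivAt H DH z := by
    have hinv : HasDerivAt (fun w => (q w)⁻¹) (-Q' / (q z) ^ 2) z := hqd.inv hqzne
    have hcpow : HasDerivAt (fun w => ((q w)⁻¹) ^ c)
        (c * ((q z)⁻¹) ^ (c - 1) * (-Q' / (q z) ^ 2)) z :=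
      hinv.cpow_const (hslit z hzball)
    have h2 := hf''d.mul hcpow
    have hDHeq : deriv (deriv f) z * ((q z)⁻¹) ^ c +
        deriv f z * (c * ((q z)⁻¹) ^ (c - 1) * (-Q' / (q z) ^ 2)) = DH := by
      rw [hPP', hDH_def, hP_def]
    rw [hDHeq] at h2
    exact h2
  -- bound |DH| (1-r^2) ≤ lam (1 - tu^2)
  have hud : HasDerivAt u (DH / ((lam : ℝ) : ℂ)) z := (hHd.sub_const 1).div_const _
  have hDHb : ‖DH‖ * (1 - r ^ 2) ≤ lam * (1 - tu ^ 2) := by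
    have := hSPu
    rw [hud.deriv, norm_div, Complex.norm_of_nonneg hlam0.le] at this
    rw [div_mul_eq_mul_div, div_le_iff₀ hlam0] at this
    linarith [this]
  -- lower bound on |H z|
  have hHz1 : ‖H z - 1‖ = lam * tu := by
    rw [htu_def, hu_def]
    simp only []
    rw [norm_div, Complex.norm_of_nonneg hlam0.le]
    field_simp
  have htri : (1 : ℝ) ≤ ‖H z‖ + lam * tu := by
    calc (1:ℝ) = ‖H z + (1 - H z)‖ := by norm_num
    _ ≤ ‖H z‖ + ‖1 - H z‖ := norm_add_le _ _
    _ = ‖H z‖ + lam * tu := by rw [norm_sub_rev, hHz1]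
  have hlamtu : lam * tu < 1 := by nlinarith
  have hHzlb : 1 - lam * tu ≤ ‖H z‖ := by linarith
  have hHne : H z ≠ 0 := by
    intro h
    rw [h] at hHzlb
    simp at hHzlb
    linarith
  have hf'ne : deriv f z ≠ 0 := by
    intro h
    apply hHne
    show deriv f z * ((q z)⁻¹) ^ c = 0
    rw [h, zero_mul]
  -- the function psi for the Caratheodory bound
  set ψf : ℂ → ℂ := fun w => (q w - 1) / (q w + 1) with hψf_def
  have hq1ne : ∀ w ∈ ball (0:ℂ) 1, q w + 1 ≠ 0 := by
    intro w hw h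
    have h1 := hqre w hw
    have h2 : (q w + 1).re = 0 := by rw [h]; simp
    rw [Complex.add_re, Complex.one_re] at h2
    linarith
  have hψdiff : DifferentiableOn ℂ ψf (ball 0 1) := by
    intro w hw
    have h1 : DifferentiableAt ℂ q w := hqdiff.differentiableAt (isOpen_ball.mem_nhds hw)
    exact ((h1.sub_const 1).div (h1.add_const 1) (hq1ne w hw)).differentiableWithinAt
  have hnormlt : ∀ w ∈ ball (0:ℂ) 1,
      Complex.normSq (q w - 1) < Complex.normSq (q w + 1) := by
    intro w hw
    have := hqre w hw
    simp only [Complex.normSq_apply, Complex.sub_re, Complex.sub_im, Complex.add_re,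
      Complex.add_im, Complex.one_re, Complex.one_im]
    nlinarith
  have hψmaps : MapsTo ψf (ball 0 1) (ball 0 1) := by
    intro w hw
    rw [mem_ball, dist_eq, sub_zero, hψf_def]
    simp only []
    rw [norm_div, div_lt_one (norm_pos_iff.mpr (hq1ne w hw))]
    have h2 := hnormlt w hw
    have e1 := Complex.sq_norm (q w - 1)
    have e2 := Complex.sq_norm (q w + 1)
    nlinarith [norm_nonneg (q w - 1), norm_nonneg (q w + 1)]
  have hψ0 : ψf 0 = 0 := by rw [hψf_def]; simp [hq0]
  have hSPψ : ‖deriv ψf z‖ * (1 - r ^ 2) ≤ 1 - (‖ψf z‖) ^ 2 :=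
    schwarzPick hψdiff hψmaps hzball
  have hψd : HasDerivAt ψf (2 * Q' / (q z + 1) ^ 2) z := by
    have h1 := (hqd.sub_const 1).div (hqd.add_const 1) (hq1ne z hzball)
    refine h1.congr_deriv ?_
    ring
  have hN : 0 < Complex.normSq (q z + 1) := Complex.normSq_pos.mpr (hq1ne z hzball)
  have hQ'b : ‖Q'‖ * (1 - r ^ 2) ≤ 2 * (q z).re := by
    rw [hψd.deriv] at hSPψ
    have e1 : ‖2 * Q' / (q z + 1) ^ 2‖
        = 2 * ‖Q'‖ / Complex.normSq (q z + 1) := by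
      rw [norm_div, norm_mul, norm_pow, Complex.sq_norm]
      norm_num
    have e2 : (‖ψf z‖) ^ 2
        = Complex.normSq (q z - 1) / Complex.normSq (q z + 1) := by
      rw [hψf_def]
      simp only []
      rw [norm_div, div_pow, Complex.sq_norm, Complex.sq_norm]
    rw [e1, e2] at hSPψ
    have hM : Complex.normSq (q z + 1) - Complex.normSq (q z - 1) = 4 * (q z).re := by
      simp only [Complex.normSq_apply, Complex.sub_re, Complex.sub_im, Complex.add_re,
        Complex.add_im, Complex.one_re, Complex.one_im]
      ring
    have h3 := mul_le_mul_of_nonneg_right hSPψ hN.le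
    have h4 : 2 * ‖Q'‖ / Complex.normSq (q z + 1) * (1 - r ^ 2) *
        Complex.normSq (q z + 1) = 2 * ‖Q'‖ * (1 - r ^ 2) := by
      field_simp
    have h5 : (1 - Complex.normSq (q z - 1) / Complex.normSq (q z + 1)) *
        Complex.normSq (q z + 1)
        = Complex.normSq (q z + 1) - Complex.normSq (q z - 1) := by field_simp
    rw [h4, h5, hM] at h3
    linarith
  -- the key identity
  have hαC : ((α:ℝ):ℂ) ≠ 0 := by exact_mod_cast hα0.ne'
  have hkey : ((α : ℂ))⁻¹ * (1 + z * deriv (deriv f) z / deriv f z) +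
        (1 - ((α : ℂ))⁻¹) * (z * deriv f z / f z)
      = 1 + ((α:ℂ))⁻¹ * (z * DH / H z) + 2 * (z * Q' / q z) := by
    have hHzeq : H z = deriv f z * P := rfl
    rw [hDH_def, hHzeq, hQ'_def, hqzval, hc_def]
    exact key_identity ((α:ℝ):ℂ) z (deriv f z) (deriv (deriv f) z) (f z) P
      hαC hz0 hfz hf'ne hPne
  refine ⟨hf'ne, hfz, ?_⟩
  rw [hkey]
  set A : ℂ := ((α:ℂ))⁻¹ * (z * DH / H z) with hA_def
  set B : ℂ := 2 * (z * Q' / q z) with hB_def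
  have hre : (1 + A + B).re = 1 + A.re + B.re := by simp
  rw [hre]
  have hreA : -(‖A‖) ≤ A.re := by
    have h1 := neg_abs_le A.re
    have h2 := Complex.abs_re_le_norm A
    have h3 := abs_nonneg A.re
    linarith
  have hreB : -(‖B‖) ≤ B.re := by
    have h1 := neg_abs_le B.re
    have h2 := Complex.abs_re_le_norm B
    have h3 := abs_nonneg B.re
    linarith
  have hAabs : ‖A‖ = α⁻¹ * (r * ‖DH‖ / ‖H z‖) := by
    rw [hA_def, norm_mul, norm_div, norm_mul, norm_inv, Complex.norm_of_nonneg hα0.le,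
      ← hr_def]
  have hBabs : ‖B‖ = 2 * (r * ‖Q'‖ / ‖q z‖) := by
    rw [hB_def, norm_mul, norm_div, norm_mul, ← hr_def]
    norm_num
  have h1r : (0:ℝ) < 1 - r := by linarith
  have h1r2 : (0:ℝ) < 1 - r^2 := by nlinarith
  have hHabs_pos : 0 < ‖H z‖ := norm_pos_iff.mpr hHne
  have hqabs_pos : 0 < ‖q z‖ := norm_pos_iff.mpr hqzne
  have hDHz : ‖DH‖ * (1 - r) ≤ lam * ‖H z‖ := by
    have hkey2 : lam * (1 - tu^2) ≤ lam * (1 + r) * (1 - lam * tu) := by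
      have u1 : (1 - tu) * (1 + tu) ≤ (1 - lam * tu) * (1 + r) := by
        apply mul_le_mul (by nlinarith) (by linarith) (by linarith) (by nlinarith)
      calc lam * (1 - tu^2) = lam * ((1 - tu) * (1 + tu)) := by ring
      _ ≤ lam * ((1 - lam * tu) * (1 + r)) := by
          exact mul_le_mul_of_nonneg_left u1 hlam0.le
      _ = lam * (1 + r) * (1 - lam * tu) := by ring
    have h6 : ‖DH‖ * (1 - r) * (1 + r) ≤ lam * ‖H z‖ * (1 + r) := by
      have h7 : ‖DH‖ * (1 - r) * (1 + r) = ‖DH‖ * (1 - r^2) := by ring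
      rw [h7]
      calc ‖DH‖ * (1 - r^2) ≤ lam * (1 - tu^2) := hDHb
      _ ≤ lam * (1 + r) * (1 - lam * tu) := hkey2
      _ ≤ lam * (1 + r) * ‖H z‖ := by
          apply mul_le_mul_of_nonneg_left hHzlb (by positivity)
      _ = lam * ‖H z‖ * (1 + r) := by ring
    have h8 : (0:ℝ) < 1 + r := by linarith
    exact le_of_mul_le_mul_right h6 h8
  have hAbound : ‖A‖ ≤ lam * r / (α * (1 - r)) := by
    rw [hAabs]
    rw [show α⁻¹ * (r * ‖DH‖ / ‖H z‖)
        = r * ‖DH‖ / (α * ‖H z‖) by field_simp]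
    rw [div_le_div_iff₀ (by positivity) (by positivity)]
    nlinarith [mul_le_mul_of_nonneg_left hDHz (mul_nonneg hα0.le hr0.le)]
  have hBbound : ‖B‖ ≤ 4 * r / (1 - r^2) := by
    rw [hBabs]
    rw [show (2:ℝ) * (r * ‖Q'‖ / ‖q z‖)
        = 2 * (r * ‖Q'‖) / ‖q z‖ by ring]
    rw [div_le_div_iff₀ (by positivity) (by positivity)]
    nlinarith [hQ'b, Complex.re_le_norm (q z), hr0, mul_le_mul_of_nonneg_left
      (le_trans hQ'b (mul_le_mul_of_nonneg_left (Complex.re_le_norm (q z)) (by norm_num)))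
      (mul_nonneg (by norm_num : (0:ℝ) ≤ 2) hr0.le)]
  have hfinal : lam * r / (α * (1 - r)) + 4 * r / (1 - r^2) < 1 := by
    rw [div_add_div _ _ (by positivity) (by positivity), div_lt_one (by positivity)]
    nlinarith [mul_neg_of_pos_of_neg h1r hquad, hquad]
  linarith [hreA, hreB, hAbound, hBbound, hfinal]
end

section
/- Let 0 < λ ≤ 1. Let f be analytic on the open unit disk 𝔻 with f(0) = 0 and f′(0) = 1, suppose Re(f(z)/z) > 0 for all z ∈ 𝔻 \ {0} (with f(z)/z → 1 as z → 0), and suppose |f′(z)·(z/f(z))² − 1| < λ for all z ∈ 𝔻 \ {0}. Set R_λ = ( −(λ + 4) + √(λ² + 12λ + 20) ) / (2(λ+1)). Then for every z with |z| < R_λ, f′(z) ≠ 0 and Re(1 + z f″(z)/f′(z)) > 0; that is, f is convex in |z| < R_λ. -/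
open Complex Metric Topology Filter

noncomputable def moeb (b z : ℂ) : ℂ := (z - b) / (1 - (starRingEnd ℂ) b * z)

lemma normSq_moeb_identity (b w : ℂ) :
    normSq (1 - (starRingEnd ℂ) b * w) - normSq (w - b) = (1 - normSq b) * (1 - normSq w) := by
  simp [normSq_apply, Complex.sub_re, Complex.sub_im, Complex.mul_re, Complex.mul_im]
  ring

lemma moeb_denom_ne (b z : ℂ) (hb : ‖b‖ < 1) (hz : ‖z‖ ≤ 1) :
    1 - (starRingEnd ℂ) b * z ≠ 0 := by
  intro h
  have : ‖(starRingEnd ℂ) b * z‖ < 1 := by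
    rw [norm_mul, Complex.norm_conj]
    calc ‖b‖ * ‖z‖ ≤ ‖b‖ * 1 :=
      mul_le_mul_of_nonneg_left hz (norm_nonneg _)
    _ < 1 := by simpa using hb
  have h1 : (starRingEnd ℂ) b * z = 1 := by linear_combination -h
  rw [h1] at this; simp at this

lemma moeb_mem_ball (b z : ℂ) (hb : ‖b‖ < 1) (hz : ‖z‖ < 1) :
    ‖moeb b z‖ < 1 := by
  have hd := moeb_denom_ne b z hb hz.le
  have hb' : normSq b < 1 := by rw [← Complex.sq_norm] at *; nlinarith [norm_nonneg b]
  have hz' : normSq z < 1 := by rw [← Complex.sq_norm] at *; nlinarith [norm_nonneg z]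
  have key := normSq_moeb_identity b z
  have hpos : 0 < normSq (1 - (starRingEnd ℂ) b * z) := normSq_pos.2 hd
  rw [moeb, norm_div, div_lt_one (norm_pos_iff.mpr hd)]
  have h3 : normSq (z - b) < normSq (1 - (starRingEnd ℂ) b * z) := by nlinarith
  nlinarith [Complex.sq_norm (z - b), Complex.sq_norm (1 - (starRingEnd ℂ) b * z),
    norm_nonneg (z - b), norm_nonneg (1 - (starRingEnd ℂ) b * z)]

lemma moeb_hasDerivAt (b z : ℂ) (hd : 1 - (starRingEnd ℂ) b * z ≠ 0) :
    HasDerivAt (moeb b) ((1 - normSq b) / (1 - (starRingEnd ℂ) b * z) ^ 2) z := by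
  have h1 : HasDerivAt (fun w => w - b) 1 z := (hasDerivAt_id z).sub_const b
  have h2 : HasDerivAt (fun w => 1 - (starRingEnd ℂ) b * w) (-((starRingEnd ℂ) b)) z := by
    simpa using ((hasDerivAt_id z).const_mul ((starRingEnd ℂ) b)).const_sub 1
  have := h1.div h2 hd
  refine this.congr_deriv ?_
  congr 1
  rw [← Complex.mul_conj]
  ring

lemma schwarzPick_s19 (F : ℂ → ℂ) (lam : ℝ) (hlam : 0 < lam)
    (hF : DifferentiableOn ℂ F (ball 0 1))
    (hm : ∀ z ∈ ball (0:ℂ) 1, ‖F z‖ < lam)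
    {z₀ : ℂ} (hz₀ : z₀ ∈ ball (0:ℂ) 1) :
    ‖deriv F z₀‖ ≤
      (lam ^ 2 - (‖F z₀‖) ^ 2) / (lam * (1 - (‖z₀‖) ^ 2)) := by
  rw [mem_ball_zero_iff] at hz₀
  set a : ℂ := F z₀ / lam with ha_def
  have ha : ‖a‖ < 1 := by
    rw [ha_def, norm_div, Complex.norm_real, Real.norm_eq_abs, abs_of_pos hlam, div_lt_one hlam]
    exact hm z₀ (mem_ball_zero_iff.2 hz₀)
  have hz₀' : ‖-z₀‖ < 1 := by simpa using hz₀
  -- inner function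
  set G : ℂ → ℂ := fun w => F (moeb (-z₀) w) / lam with hG_def
  set ψ : ℂ → ℂ := fun w => moeb a (G w) with hψ_def
  have hmem : ∀ w ∈ ball (0:ℂ) 1, moeb (-z₀) w ∈ ball (0:ℂ) 1 := fun w hw =>
    mem_ball_zero_iff.2 (moeb_mem_ball _ _ hz₀' (mem_ball_zero_iff.1 hw))
  have hGlt : ∀ w ∈ ball (0:ℂ) 1, ‖G w‖ < 1 := by
    intro w hw
    rw [hG_def]
    simp only [norm_div, Complex.norm_real, Real.norm_eq_abs, abs_of_pos hlam]
    rw [div_lt_one hlam]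
    exact hm _ (hmem w hw)
  -- ψ has a nice derivative at each point of the ball
  have hψderiv : ∀ w ∈ ball (0:ℂ) 1, HasDerivAt ψ
      ((1 - normSq a) / (1 - (starRingEnd ℂ) a * G w) ^ 2 *
        (deriv F (moeb (-z₀) w) / lam *
          ((1 - normSq (-z₀)) / (1 - (starRingEnd ℂ) (-z₀) * w) ^ 2))) w := by
    intro w hw
    have hw1 : ‖w‖ < 1 := mem_ball_zero_iff.1 hw
    have hden1 : 1 - (starRingEnd ℂ) (-z₀) * w ≠ 0 := moeb_denom_ne _ _ hz₀' hw1.le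
    have H1 : HasDerivAt (moeb (-z₀))
        ((1 - normSq (-z₀)) / (1 - (starRingEnd ℂ) (-z₀) * w) ^ 2) w :=
      moeb_hasDerivAt _ _ hden1
    have hu : moeb (-z₀) w ∈ ball (0:ℂ) 1 := hmem w hw
    have H2 : HasDerivAt F (deriv F (moeb (-z₀) w)) (moeb (-z₀) w) :=
      (hF.differentiableAt (isOpen_ball.mem_nhds hu)).hasDerivAt
    have HG : HasDerivAt G (deriv F (moeb (-z₀) w) / lam *
        ((1 - normSq (-z₀)) / (1 - (starRingEnd ℂ) (-z₀) * w) ^ 2)) w := by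
      have := (H2.comp w H1).div_const (lam : ℂ)
      refine this.congr_deriv ?_
      ring
    have hden2 : 1 - (starRingEnd ℂ) a * G w ≠ 0 := moeb_denom_ne _ _ ha (hGlt w hw).le
    have H4 : HasDerivAt (moeb a)
        ((1 - normSq a) / (1 - (starRingEnd ℂ) a * G w) ^ 2) (G w) :=
      moeb_hasDerivAt _ _ hden2
    exact H4.comp w HG
  have hψ0 : ψ 0 = 0 := by
    have h0 : moeb (-z₀) 0 = z₀ := by simp [moeb]
    have hGa : G 0 = a := by rw [hG_def]; simp [h0, ha_def]
    rw [hψ_def]; simp only [hGa, moeb, sub_self, zero_div]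
  have hψdiff : DifferentiableOn ℂ ψ (ball 0 1) := fun w hw =>
    ((hψderiv w hw).differentiableAt).differentiableWithinAt
  have hψmaps : Set.MapsTo ψ (ball (0:ℂ) 1) (ball (ψ 0) 1) := by
    rw [hψ0]
    intro w hw
    exact mem_ball_zero_iff.2 (moeb_mem_ball _ _ ha (hGlt w hw))
  have hb := Complex.norm_deriv_le_div_of_mapsTo_ball hψdiff (hψmaps.mono_right ball_subset_closedBall) one_pos
  rw [(hψderiv 0 (mem_ball_self one_pos)).deriv] at hb
  -- now compute
  have h0 : moeb (-z₀) 0 = z₀ := by simp [moeb]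
  have hGa : G 0 = a := by rw [hG_def]; simp [h0, ha_def]
  have hs : normSq a = (‖F z₀‖)^2 / lam^2 := by
    rw [← Complex.sq_norm, ha_def, norm_div, Complex.norm_real, Real.norm_eq_abs, abs_of_pos hlam, div_pow]
  have hsa : (starRingEnd ℂ) a * a = (normSq a : ℂ) := by
    rw [mul_comm, Complex.mul_conj]
  have hslt : normSq a < 1 := by
    rw [← Complex.sq_norm]; nlinarith [norm_nonneg a]
  have hz₀a : ‖z₀‖ < 1 := hz₀
  have htlt : normSq (-z₀) < 1 := by
    rw [← Complex.sq_norm]; simp only [norm_neg]; nlinarith [norm_nonneg z₀]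
  rw [h0, hGa, hsa] at hb
  simp only [mul_zero, sub_zero, one_pow, div_one] at hb
  -- hb : abs ((1 - ↑s)/(1 - ↑s)^2 * (deriv F z₀ / lam * (1 - ↑t))) ≤ 1
  set s := normSq a
  set t := normSq (-z₀)
  have hsne : (1 : ℂ) - (s:ℂ) ≠ 0 := by
    intro h
    have : (s:ℝ) = 1 := by exact_mod_cast (by linear_combination -h : (s:ℂ) = 1)
    linarith
  have habs : ‖(1 - (s:ℂ))/(1 - (s:ℂ))^2 * (deriv F z₀ / lam * (1 - (t:ℂ)))‖ =
      (1/(1-s)) * (‖deriv F z₀‖ / lam * (1 - t)) := by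
    have e1 : ((1:ℂ) - (s:ℂ)) = ((1 - s : ℝ) : ℂ) := by push_cast; ring
    have e2 : ((1:ℂ) - (t:ℂ)) = ((1 - t : ℝ) : ℂ) := by push_cast; ring
    rw [e1, e2]
    simp only [norm_mul, norm_div, norm_pow, Complex.norm_real, Real.norm_eq_abs]
    rw [abs_of_pos (by linarith : (0:ℝ) < 1 - s), abs_of_pos (by linarith : (0:ℝ) < 1 - t),
      abs_of_pos hlam]
    have h1s : (1:ℝ) - s ≠ 0 := by linarith
    field_simp
  rw [habs] at hb
  have ht : t = ‖z₀‖ ^ 2 := by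
    simp only [t, ← Complex.sq_norm, norm_neg]
  rw [ht, hs] at hb
  have hr2 : (‖z₀‖) ^ 2 < 1 := by nlinarith [norm_nonneg z₀]
  have hFlt : ‖F z₀‖ < lam := hm z₀ (mem_ball_zero_iff.2 hz₀a)
  have hA : 0 < 1 - ‖F z₀‖ ^ 2 / lam ^ 2 := by
    have h2 : ‖F z₀‖ ^ 2 < lam ^ 2 := by nlinarith [norm_nonneg (F z₀)]
    have h3 := (div_lt_one (by positivity : (0:ℝ) < lam ^ 2)).2 h2
    linarith
  rw [one_div, inv_mul_le_iff₀ hA, mul_one] at hb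
  have hb3 : ‖deriv F z₀‖ * (lam * (1 - ‖z₀‖ ^ 2)) ≤
      lam ^ 2 - ‖F z₀‖ ^ 2 := by
    have h := mul_le_mul_of_nonneg_left hb (by positivity : (0:ℝ) ≤ lam ^ 2)
    calc ‖deriv F z₀‖ * (lam * (1 - ‖z₀‖ ^ 2))
        = lam ^ 2 * (‖deriv F z₀‖ / lam * (1 - ‖z₀‖ ^ 2)) := by
          field_simp
      _ ≤ lam ^ 2 * (1 - ‖F z₀‖ ^ 2 / lam ^ 2) := h
      _ = lam ^ 2 - ‖F z₀‖ ^ 2 := by field_simp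
  rw [le_div_iff₀ (by nlinarith : (0:ℝ) < lam * (1 - ‖z₀‖ ^ 2))]
  exact hb3

lemma schwarz_zero (F : ℂ → ℂ) (lam : ℝ) (hlam : 0 < lam)
    (hF : DifferentiableOn ℂ F (ball 0 1)) (hF0 : F 0 = 0)
    (hm : ∀ z ∈ ball (0:ℂ) 1, ‖F z‖ < lam)
    {z : ℂ} (hz : z ∈ ball (0:ℂ) 1) : ‖F z‖ ≤ lam * ‖z‖ := by
  rcases eq_or_ne z 0 with rfl | hne
  · simp [hF0]
  have hmaps : Set.MapsTo F (ball (0:ℂ) 1) (ball (F 0) lam) := by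
    intro w hw
    rw [hF0, mem_ball_zero_iff]
    exact hm w hw
  have := Complex.norm_dslope_le_div_of_mapsTo_ball hF (hmaps.mono_right ball_subset_closedBall) hz
  rw [dslope_of_ne _ hne, slope_def_field, hF0, sub_zero, sub_zero, div_one] at this
  rw [norm_div, div_le_iff₀ (norm_pos_iff.mpr hne)] at this
  exact this

lemma pclass_deriv_bound (p : ℂ → ℂ) (hp : DifferentiableOn ℂ p (ball 0 1))
    (hre : ∀ z ∈ ball (0:ℂ) 1, 0 < (p z).re) {z : ℂ} (hz : z ∈ ball (0:ℂ) 1) :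
    ‖deriv p z‖ ≤ 2 * (p z).re / (1 - (‖z‖) ^ 2) := by
  have hsq : ∀ w : ℂ, normSq (w + 1) - normSq (w - 1) = 4 * w.re := by
    intro w
    simp only [normSq_apply, Complex.add_re, Complex.add_im, Complex.sub_re, Complex.sub_im,
      Complex.one_re, Complex.one_im]
    ring
  have hne : ∀ w ∈ ball (0:ℂ) 1, p w + 1 ≠ 0 := by
    intro w hw h
    have : (p w + 1).re = 0 := by rw [h]; simp
    simp only [Complex.add_re, Complex.one_re] at this
    have := hre w hw; linarith
  set ω : ℂ → ℂ := fun w => (p w - 1) / (p w + 1) with hω_def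
  have hωd : ∀ w ∈ ball (0:ℂ) 1, HasDerivAt ω (2 * deriv p w / (p w + 1) ^ 2) w := by
    intro w hw
    have hpw : HasDerivAt p (deriv p w) w :=
      (hp.differentiableAt (isOpen_ball.mem_nhds hw)).hasDerivAt
    have h1 : HasDerivAt (fun u => p u - 1) (deriv p w) w := hpw.sub_const 1
    have h2 : HasDerivAt (fun u => p u + 1) (deriv p w) w := hpw.add_const 1
    have := h1.div h2 (hne w hw)
    refine this.congr_deriv ?_
    congr 1
    ring
  have hωlt : ∀ w ∈ ball (0:ℂ) 1, ‖ω w‖ < 1 := by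
    intro w hw
    have h1 := hne w hw
    have h2 := hre w hw
    rw [hω_def]
    simp only [norm_div]
    rw [div_lt_one (norm_pos_iff.mpr h1)]
    have key := hsq (p w)
    have h3 : 0 < normSq (p w + 1) := normSq_pos.2 h1
    nlinarith [Complex.sq_norm (p w - 1), Complex.sq_norm (p w + 1),
      norm_nonneg (p w - 1), norm_nonneg (p w + 1)]
  have hωdiff : DifferentiableOn ℂ ω (ball 0 1) := fun w hw =>
    ((hωd w hw).differentiableAt).differentiableWithinAt
  have hSP := schwarzPick_s19 ω 1 one_pos hωdiff hωlt hz
  rw [(hωd z hz).deriv] at hSP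
  have h1 := hne z hz
  have h2 := hre z hz
  have habs : ‖2 * deriv p z / (p z + 1) ^ 2‖ =
      2 * ‖deriv p z‖ / (‖p z + 1‖) ^ 2 := by
    simp [norm_div, norm_mul, norm_pow, Complex.norm_two]
  rw [habs] at hSP
  have hr2 : (‖z‖) ^ 2 < 1 := by
    rw [mem_ball_zero_iff] at hz
    have : ‖z‖ < 1 := hz
    nlinarith [norm_nonneg z]
  have hωsq : (‖ω z‖) ^ 2 =
      (‖p z - 1‖) ^ 2 / (‖p z + 1‖) ^ 2 := by
    rw [hω_def]; simp [norm_div, div_pow]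
  have key := hsq (p z)
  have hape : 0 < ‖p z + 1‖ := norm_pos_iff.mpr h1
  have h3 : (‖p z + 1‖) ^ 2 - (‖p z - 1‖) ^ 2 = 4 * (p z).re := by
    rw [Complex.sq_norm, Complex.sq_norm]; exact key
  rw [hωsq] at hSP
  rw [div_le_div_iff₀ (by positivity) (by nlinarith : (0:ℝ) < 1 * (1 - ‖z‖ ^ 2))] at hSP
  have hc : ‖p z - 1‖ ^ 2 / ‖p z + 1‖ ^ 2 * ‖p z + 1‖ ^ 2
      = ‖p z - 1‖ ^ 2 := div_mul_cancel₀ _ (by positivity)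
  rw [le_div_iff₀ (by nlinarith : (0:ℝ) < 1 - ‖z‖ ^ 2)]
  nlinarith [hSP, hc, h3]


set_option maxHeartbeats 2000000 in
theorem stmt_19 (lam : ℝ) (hlam : lam ∈ Set.Ioc (0 : ℝ) 1)
    (f : ℂ → ℂ) (hanal : DifferentiableOn ℂ f (ball (0 : ℂ) 1))
    (hf0 : f 0 = 0) (hf'0 : deriv f 0 = 1)
    (hP : ∀ z ∈ ball (0 : ℂ) 1, z ≠ 0 → 0 < (f z / z).re)
    (hU : ∀ z ∈ ball (0 : ℂ) 1, z ≠ 0 →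
      ‖deriv f z * (z / f z) ^ 2 - 1‖ < lam)
    (R : ℝ)
    (hR : R = (-(lam + 4) + Real.sqrt (lam ^ 2 + 12 * lam + 20)) / (2 * (lam + 1))) :
    ∀ z : ℂ, ‖z‖ < R →
      deriv f z ≠ 0 ∧ 0 < (1 + z * deriv (deriv f) z / deriv f z).re := by
  obtain ⟨hl0, hl1⟩ := hlam
  have hs20 : (0:ℝ) ≤ lam ^ 2 + 12 * lam + 20 := by nlinarith
  have hs2 : Real.sqrt (lam ^ 2 + 12 * lam + 20) ^ 2 = lam ^ 2 + 12 * lam + 20 :=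
    Real.sq_sqrt hs20
  have hsnn := Real.sqrt_nonneg (lam ^ 2 + 12 * lam + 20)
  have hla : (2 * (lam + 1)) ≠ 0 := by positivity
  have hRroot : (1 + lam) * R ^ 2 + (4 + lam) * R = 1 := by
    rw [hR]; generalize Real.sqrt (lam ^ 2 + 12 * lam + 20) = S at hs2 ⊢; field_simp; linear_combination (1 + lam) * hs2
  have hR0 : 0 < R := by
    rw [hR]
    apply div_pos _ (by positivity)
    nlinarith [hs2, hsnn]
  have hR4 : R < 1/4 := by nlinarith
  intro z hzR
  have hr0 : 0 ≤ ‖z‖ := norm_nonneg z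
  set r := ‖z‖ with hr_def
  have hrR : r < R := hzR
  have hr1 : r < 1 := by linarith
  have h1r : (0:ℝ) < 1 - r := by linarith
  have h1r2 : (0:ℝ) < 1 - r^2 := by nlinarith
  have hz1 : z ∈ ball (0:ℂ) 1 := mem_ball_zero_iff.2 (by exact hr1)
  set p : ℂ → ℂ := dslope f 0 with hp_def
  have hball : ball (0:ℂ) 1 ∈ 𝓝 (0:ℂ) := isOpen_ball.mem_nhds (mem_ball_self one_pos)
  have hp_diff : DifferentiableOn ℂ p (ball 0 1) := (differentiableOn_dslope hball).2 hanal
  have hp0 : p 0 = 1 := by rw [hp_def, dslope_same, hf'0]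
  have hpz : ∀ w : ℂ, w ≠ 0 → p w = f w / w := by
    intro w hw
    rw [hp_def, dslope_of_ne _ hw, slope_def_field, hf0, sub_zero, sub_zero]
  have hpre : ∀ w ∈ ball (0:ℂ) 1, 0 < (p w).re := by
    intro w hw
    rcases eq_or_ne w 0 with rfl | hne
    · rw [hp0]; simp
    · rw [hpz w hne]; exact hP w hw hne
  have hpne : ∀ w ∈ ball (0:ℂ) 1, p w ≠ 0 := by
    intro w hw h
    have := hpre w hw; rw [h] at this; simp at this
  have hfz' : ∀ w : ℂ, f w = w * p w := by
    intro w
    rcases eq_or_ne w 0 with rfl | hw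
    · simp [hf0]
    · rw [hpz w hw]; field_simp
  have hpan : AnalyticOnNhd ℂ p (ball 0 1) := hp_diff.analyticOnNhd isOpen_ball
  have hp'diffAt : ∀ w ∈ ball (0:ℂ) 1, DifferentiableAt ℂ (deriv p) w := fun w hw =>
    (hpan.deriv w hw).differentiableAt
  have hpAt : ∀ w ∈ ball (0:ℂ) 1, HasDerivAt p (deriv p w) w := fun w hw =>
    (hp_diff.differentiableAt (isOpen_ball.mem_nhds hw)).hasDerivAt
  have hf'w : ∀ w ∈ ball (0:ℂ) 1, deriv f w = p w + w * deriv p w := by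
    intro w hw
    have heq : f =ᶠ[𝓝 w] fun u => u * p u :=
      Filter.eventuallyEq_of_mem (isOpen_ball.mem_nhds hw) (fun u _ => hfz' u)
    rw [heq.deriv_eq]
    have H : HasDerivAt (fun u => u * p u) (1 * p w + w * deriv p w) w :=
      (hasDerivAt_id w).mul (hpAt w hw)
    rw [H.deriv]; ring
  set h : ℂ → ℂ := fun w => (p w + w * deriv p w) / (p w) ^ 2 - 1 with hh_def
  have hh_eq : ∀ w ∈ ball (0:ℂ) 1, w ≠ 0 → h w = deriv f w * (w / f w) ^ 2 - 1 := by
    intro w hw hne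
    have hpw := hpne w hw
    simp only [hh_def]
    rw [hf'w w hw, hfz' w]
    field_simp
  have hh0 : h 0 = 0 := by
    simp only [hh_def]
    rw [hp0]; simp
  have hhlt : ∀ w ∈ ball (0:ℂ) 1, ‖h w‖ < lam := by
    intro w hw
    rcases eq_or_ne w 0 with rfl | hne
    · rw [hh0]; simpa using hl0
    · rw [hh_eq w hw hne]; exact hU w hw hne
  have hh_diffAt : ∀ w ∈ ball (0:ℂ) 1, DifferentiableAt ℂ h w := by
    intro w hw
    have h1 : DifferentiableAt ℂ p w := hp_diff.differentiableAt (isOpen_ball.mem_nhds hw)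
    have h2 : DifferentiableAt ℂ (deriv p) w := hp'diffAt w hw
    exact ((h1.add (differentiableAt_id.mul h2)).div (h1.pow 2)
      (pow_ne_zero 2 (hpne w hw))).sub_const 1
  have hh_diff : DifferentiableOn ℂ h (ball 0 1) := fun w hw =>
    (hh_diffAt w hw).differentiableWithinAt
  have hSch : ‖h z‖ ≤ lam * r := schwarz_zero h lam hl0 hh_diff hh0 hhlt hz1
  have hSP : ‖deriv h z‖ ≤
      (lam ^ 2 - (‖h z‖) ^ 2) / (lam * (1 - r ^ 2)) :=
    schwarzPick_s19 h lam hl0 hh_diff hhlt hz1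
  have hPd : ‖deriv p z‖ ≤ 2 * (p z).re / (1 - r ^ 2) :=
    pclass_deriv_bound p hp_diff hpre hz1
  have hf'2 : ∀ w ∈ ball (0:ℂ) 1, deriv f w = (1 + h w) * (p w) ^ 2 := by
    intro w hw
    have hone : (1 : ℂ) + h w = (p w + w * deriv p w) / (p w) ^ 2 := by
      simp only [hh_def]; ring
    rw [hf'w w hw, hone, div_mul_cancel₀ _ (pow_ne_zero 2 (hpne w hw))]
  set t := ‖h z‖ with ht_def
  have ht0 : 0 ≤ t := norm_nonneg _
  have ht_lt1 : t < 1 := by nlinarith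
  have h1h : (1 : ℂ) + h z ≠ 0 := by
    intro he
    have he' : h z = -1 := by linear_combination he
    rw [ht_def, he'] at ht_lt1
    simp at ht_lt1
  have hf'ne : deriv f z ≠ 0 := by
    rw [hf'2 z hz1]
    exact mul_ne_zero h1h (pow_ne_zero 2 (hpne z hz1))
  refine ⟨hf'ne, ?_⟩
  have hf''z : deriv (deriv f) z =
      deriv h z * (p z) ^ 2 + (1 + h z) * (2 * p z ^ 1 * deriv p z) := by
    have heq : deriv f =ᶠ[𝓝 z] fun w => (1 + h w) * (p w) ^ 2 :=
      Filter.eventuallyEq_of_mem (isOpen_ball.mem_nhds hz1) (fun w hw => hf'2 w hw)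
    rw [heq.deriv_eq]
    have hhAt : HasDerivAt h (deriv h z) z := (hh_diffAt z hz1).hasDerivAt
    have H : HasDerivAt (fun w => (1 + h w) * (p w) ^ 2)
        (deriv h z * (p z) ^ 2 + (1 + h z) * ((2 : ℕ) * p z ^ 1 * deriv p z)) z :=
      (hhAt.const_add 1).mul ((hpAt z hz1).pow 2)
    rw [H.deriv]
    norm_num
  have hpz1 := hpne z hz1
  have hE : 1 + z * deriv (deriv f) z / deriv f z
      = 1 + z * deriv h z / (1 + h z) + 2 * z * deriv p z / p z := by
    rw [hf''z, hf'2 z hz1]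
    field_simp
    ring
  rw [hE]
  set u := z * deriv h z / (1 + h z) with hu_def
  set v := 2 * z * deriv p z / p z with hv_def
  have hre_eq : (1 + u + v).re = 1 + u.re + v.re := by simp
  -- triangle bound for |1 + h z|
  have h1habs : 1 - t ≤ ‖1 + h z‖ := by
    have tri : ‖(1 + h z) + (-(h z))‖ ≤
        ‖1 + h z‖ + ‖-(h z)‖ := norm_add_le _ _
    have e : (1 + h z) + (-(h z)) = 1 := by ring
    rw [e, norm_one, norm_neg] at tri
    linarith
  have h1t : (0:ℝ) < 1 - t := by linarith
  -- bound |u|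
  have hu_abs : ‖u‖ ≤ r * ‖deriv h z‖ / (1 - t) := by
    rw [hu_def, norm_div, norm_mul]
    exact div_le_div_of_nonneg_left (mul_nonneg hr0 (norm_nonneg _)) h1t h1habs
  -- |u| ≤ lam r/(1-r)
  have hSP' : ‖deriv h z‖ * (lam * (1 - r ^ 2)) ≤ lam ^ 2 - t ^ 2 := by
    rw [← le_div_iff₀ (by positivity)]
    exact hSP
  have hD0 : 0 ≤ ‖deriv h z‖ := norm_nonneg _
  have f1 : lam - t ≤ lam * (1 - t) := by nlinarith
  have f2 : lam + t ≤ lam * (1 + r) := by nlinarith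
  have f3 : lam ^ 2 - t ^ 2 ≤ lam ^ 2 * (1 - t) * (1 + r) := by
    nlinarith [mul_le_mul f1 f2 (by linarith : (0:ℝ) ≤ lam + t)
      (by nlinarith : (0:ℝ) ≤ lam * (1 - t))]
  have hu_final : ‖u‖ ≤ lam * r / (1 - r) := by
    refine hu_abs.trans ?_
    rw [div_le_div_iff₀ h1t h1r]
    have A : r * (‖deriv h z‖ * (lam * (1 - r ^ 2))) ≤ r * (lam ^ 2 - t ^ 2) :=
      mul_le_mul_of_nonneg_left hSP' hr0
    have B : r * (lam ^ 2 - t ^ 2) ≤ r * (lam ^ 2 * (1 - t) * (1 + r)) :=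
      mul_le_mul_of_nonneg_left f3 hr0
    nlinarith [mul_pos hl0 (by linarith : (0:ℝ) < 1 + r)]
  -- |v| ≤ 4r/(1-r^2)
  have hpabs : 0 < ‖p z‖ := norm_pos_iff.mpr hpz1
  have hrep : (p z).re ≤ ‖p z‖ := Complex.re_le_norm _
  have hv_final : ‖v‖ ≤ 4 * r / (1 - r ^ 2) := by
    have e : ‖v‖ = 2 * r * ‖deriv p z‖ / ‖p z‖ := by
      rw [hv_def, norm_div, norm_mul, norm_mul, Complex.norm_two]
    rw [e, div_le_div_iff₀ hpabs h1r2]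
    have hPd' : ‖deriv p z‖ * (1 - r ^ 2) ≤ 2 * (p z).re := by
      rw [← le_div_iff₀ h1r2]; exact hPd
    nlinarith [mul_le_mul_of_nonneg_left hPd' (by linarith : (0:ℝ) ≤ 2 * r)]
  -- final positivity
  have hq : (4 + lam) * r + (1 + lam) * r ^ 2 < 1 := by
    nlinarith [mul_le_mul hrR.le hrR.le hr0 hR0.le, hrR, hr0, hR0, hRroot]
  have hsum : lam * r / (1 - r) + 4 * r / (1 - r ^ 2) < 1 := by
    have e : lam * r / (1 - r) + 4 * r / (1 - r ^ 2) = (lam * r * (1 + r) + 4 * r) / (1 - r ^ 2) := by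
      rw [div_add_div _ _ (ne_of_gt h1r) (ne_of_gt h1r2)]
      rw [div_eq_div_iff (by nlinarith : (1 - r) * (1 - r ^ 2) ≠ 0) (ne_of_gt h1r2)]
      ring
    rw [e, div_lt_one h1r2]
    nlinarith
  have hu_re : -(‖u‖) ≤ u.re := (abs_le.1 (Complex.abs_re_le_norm u)).1
  have hv_re : -(‖v‖) ≤ v.re := (abs_le.1 (Complex.abs_re_le_norm v)).1
  rw [hre_eq]
  linarith
end
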